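/- Let p_1, …, p_m in [0,1], nonnegative reals R̂_1, …, R̂_m, and q in (0,1). Then the deterministically pruned selection set is contained in the BH selection set: S(1, …, 1) ⊆ S_BH. -/
import Mathlib


/-- The pruning threshold `r*(λ) = max{r ∈ {0,…,m} : #{j : p_j ≤ q·R̂_j/m and λ_j·R̂_j ≤ r} ≥ r}`. -/
noncomputable def prunedThreshold (m : ℕ) (q : ℝ) (p R lam : Fin m → ℝ) : ℕ :=
  Nat.findGreatest
    (fun r => r ≤ Set.ncard {j : Fin m | p j ≤ q * R j / m ∧ lam j * R j ≤ (r : ℝ)}) m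

/-- The pruned selection set `S(λ) = {j : p_j ≤ q·R̂_j/m and λ_j·R̂_j ≤ r*(λ)}`. -/
noncomputable def prunedSet (m : ℕ) (q : ℝ) (p R lam : Fin m → ℝ) : Set (Fin m) :=
  {j : Fin m | p j ≤ q * R j / m ∧ lam j * R j ≤ (prunedThreshold m q p R lam : ℝ)}

/-- The BH index `r*_BH = max{r ∈ {0,…,m} : #{j : p_j ≤ q·r/m} ≥ r}`. -/
noncomputable def bhThreshold (m : ℕ) (q : ℝ) (p : Fin m → ℝ) : ℕ :=
  Nat.findGreatest (fun r => r ≤ Set.ncard {j : Fin m | p j ≤ q * (r : ℝ) / m}) m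

/-- The BH selection set `S_BH = {j : p_j ≤ q·r*_BH/m}`. -/
noncomputable def bhSet (m : ℕ) (q : ℝ) (p : Fin m → ℝ) : Set (Fin m) :=
  {j : Fin m | p j ≤ q * (bhThreshold m q p : ℝ) / m}

/-- The deterministically pruned selection set is contained in the BH selection
set: S(1,…,1) ⊆ S_BH. -/
theorem optcs_pruned_subset_bh
    (m : ℕ) (q : ℝ) (hq : q ∈ Set.Ioo (0 : ℝ) 1)
    (p : Fin m → ℝ) (hp : ∀ j, p j ∈ Set.Icc (0 : ℝ) 1)
    (R : Fin m → ℝ) (hR : ∀ j, 0 ≤ R j) :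
    prunedSet m q p R (fun _ => 1) ⊆ bhSet m q p := by
  intro j hj
  obtain ⟨hpj, hRj⟩ := hj
  simp only [one_mul] at hRj
  set r := prunedThreshold m q p R (fun _ => 1) with hr
  have hm : 0 < m := j.pos
  have hmR : (0:ℝ) < m := by exact_mod_cast hm
  -- p j ≤ q * r / m
  have key : p j ≤ q * (r:ℝ) / m := by
    refine le_trans hpj ?_
    apply div_le_div_of_nonneg_right ?_ hmR.le
    exact mul_le_mul_of_nonneg_left hRj (le_of_lt hq.1)
  -- r ≤ bhThreshold
  have hP : (r : ℕ) ≤ Set.ncard {i : Fin m | p i ≤ q * (r : ℝ) / m} := by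
    have hspec : r ≤ Set.ncard {i : Fin m |
        p i ≤ q * R i / m ∧ (fun _ : Fin m => (1:ℝ)) i * R i ≤ (r : ℝ)} :=
      Nat.findGreatest_spec (P := fun s =>
        s ≤ Set.ncard {i : Fin m | p i ≤ q * R i / m ∧ (fun _ : Fin m => (1:ℝ)) i * R i ≤ (s : ℝ)})
        (Nat.zero_le m) (Nat.zero_le _)
    refine hspec.trans (Set.ncard_le_ncard ?_ (Set.toFinite _))
    intro i hi
    obtain ⟨h1, h2⟩ := hi
    simp only [one_mul] at h2
    refine le_trans h1 ?_
    apply div_le_div_of_nonneg_right ?_ hmR.le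
    exact mul_le_mul_of_nonneg_left h2 (le_of_lt hq.1)
  have hle : r ≤ bhThreshold m q p :=
    Nat.le_findGreatest (hr ▸ Nat.findGreatest_le m) hP
  refine le_trans key ?_
  apply div_le_div_of_nonneg_right ?_ hmR.le
  exact mul_le_mul_of_nonneg_left (by exact_mod_cast hle) (le_of_lt hq.1)
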